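/- Fix λ₀ ∈ ℝ, and let λ ↦ w_λ ∈ H₊² be a family defined for λ near λ₀, differentiable at λ₀ in the graph norm of N*, such that (N* + V* − λ)τ w_λ = 0 for each λ. Then Ω(T w_{λ₀}, T ẇ_{λ₀}) = −⟨τ w_{λ₀}, w_{λ₀}⟩_{H²}, where ẇ_{λ₀} denotes the derivative of w_λ at λ₀. -/

import Mathlib

noncomputable section

open Function Set

namespace CSO

local notation "⟪" x ", " y "⟫" => (inner ℂ x y : ℂ)

/-- The ℓ²-direct sum `E ⊕ E`. -/
abbrev Sq (E : Type*) : Type _ := WithLp 2 (E × E)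

section Pieces

variable {E F E' F' : Type*}
  [NormedAddCommGroup E] [InnerProductSpace ℂ E]
  [NormedAddCommGroup F] [InnerProductSpace ℂ F]
  [NormedAddCommGroup E'] [InnerProductSpace ℂ E']
  [NormedAddCommGroup F'] [InnerProductSpace ℂ F']

/-- Pairing map into the ℓ²-direct sum. -/
def mk2 (x y : E) : Sq E := (WithLp.equiv 2 (E × E)).symm (x, y)

/-- First component. -/
def c1 (u : Sq E) : E := (WithLp.equiv 2 (E × E) u).1

/-- Second component. -/
def c2 (u : Sq E) : E := (WithLp.equiv 2 (E × E) u).2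

/-- Transport of a product of continuous linear maps to the ℓ²-products. -/
def pm (A : E →L[ℂ] E') (B : F →L[ℂ] F') :
    WithLp 2 (E × F) →L[ℂ] WithLp 2 (E' × F') :=
  (((WithLp.prodContinuousLinearEquiv 2 ℂ E' F').symm :
      (E' × F') →L[ℂ] WithLp 2 (E' × F')).comp (A.prodMap B)).comp
    ((WithLp.prodContinuousLinearEquiv 2 ℂ E F :
      WithLp 2 (E × F) ≃L[ℂ] (E × F)) : WithLp 2 (E × F) →L[ℂ] E × F)

/-- The continuous linear map `x ↦ (A x, B x)` into an ℓ²-direct sum. -/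
def mk2L (A B : E →L[ℂ] F) : E →L[ℂ] Sq F :=
  (((WithLp.prodContinuousLinearEquiv 2 ℂ F F).symm :
      (F × F) →L[ℂ] Sq F)).comp (A.prod B)

/-- First component as a continuous linear map. -/
def c1L : Sq E →L[ℂ] E :=
  (ContinuousLinearMap.fst ℂ E E).comp
    ((WithLp.prodContinuousLinearEquiv 2 ℂ E E :
      Sq E ≃L[ℂ] (E × E)) : Sq E →L[ℂ] E × E)

/-- Second component as a continuous linear map. -/
def c2L : Sq E →L[ℂ] E :=
  (ContinuousLinearMap.snd ℂ E E).comp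
    ((WithLp.prodContinuousLinearEquiv 2 ℂ E E :
      Sq E ≃L[ℂ] (E × E)) : Sq E →L[ℂ] E × E)

/-- The involution `τ (u₁, u₂) = (u₂, u₁)`. -/
def swapL (E : Type*) [NormedAddCommGroup E] [InnerProductSpace ℂ E] :
    Sq E →L[ℂ] Sq E := mk2L c2L c1L

/-- The standard symplectic matrix `J (f₁, f₂) = (f₂, -f₁)`. -/
def Jm (E : Type*) [NormedAddCommGroup E] [InnerProductSpace ℂ E] :
    Sq E →L[ℂ] Sq E := mk2L c2L (-c1L)

/-- The symplectic matrix `𝒥 = J ⊕ (-J)` on `𝔥⁴`. -/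
def calJ (E : Type*) [NormedAddCommGroup E] [InnerProductSpace ℂ E] :
    Sq (Sq E) →L[ℂ] Sq (Sq E) := pm (Jm E) (-(Jm E))

/-- The symplectic form `ω(f, g) = ⟨f₂, g₁⟩ - ⟨f₁, g₂⟩` on `𝔥²`. -/
def om (f g : Sq E) : ℂ := ⟪c2 f, c1 g⟫ - ⟪c1 f, c2 g⟫

/-- The symplectic form
`Ω(f, g) = ⟨f₂,g₁⟩ - ⟨f₁,g₂⟩ - ⟨f₄,g₃⟩ + ⟨f₃,g₄⟩` on `𝔥⁴`. -/
def Om (f g : Sq (Sq E)) : ℂ := om (c1 f) (c1 g) - om (c2 f) (c2 g)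

/-- Orthogonal projection predicate. -/
def IsOrthProj [CompleteSpace E] (P : E →L[ℂ] E) : Prop :=
  P.comp P = P ∧ IsSelfAdjoint P

/-- The range of `P` is a Lagrangian subspace of `(𝔥², ω)`. -/
def IsLagrangianRange (P : Sq E →L[ℂ] Sq E) : Prop :=
  ∀ f, f ∈ Set.range P ↔ ∀ g ∈ Set.range P, om f g = 0

end Pieces

/-- The core data: a closed densely defined symmetric operator `A` with equal finite
deficiency indices `dim 𝔥`, whose adjoint `A*` has domain the Hilbert space `Hp = H₊`
(with the graph inner product), realized through the embedding `e : H₊ → H` and the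
bounded operator `As = A* : H₊ → H`. -/
structure Core (H 𝔥 Hp : Type*) [NormedAddCommGroup H] [InnerProductSpace ℂ H]
    [NormedAddCommGroup 𝔥] [InnerProductSpace ℂ 𝔥]
    [NormedAddCommGroup Hp] [InnerProductSpace ℂ Hp] where
  e : Hp →L[ℂ] H
  As : Hp →L[ℂ] H
  e_inj : Function.Injective e
  graph_inner : ∀ u v : Hp, ⟪u, v⟫ = ⟪e u, e v⟫ + ⟪As u, As v⟫
  domA : Submodule ℂ Hp
  dense_dom : Dense (e '' (domA : Set Hp))
  adjoint_iff : ∀ v w : H,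
      (∃ p : Hp, e p = v ∧ As p = w) ↔ ∀ u ∈ domA, ⟪As u, v⟫ = ⟪e u, w⟫
  closed_graph : IsClosed {q : H × H | ∃ p ∈ domA, e p = q.1 ∧ As p = q.2}
  defect_m : Module.finrank ℂ
      (LinearMap.ker (As.toLinearMap - Complex.I • e.toLinearMap)) = Module.finrank ℂ 𝔥
  defect_p : Module.finrank ℂ
      (LinearMap.ker (As.toLinearMap + Complex.I • e.toLinearMap)) = Module.finrank ℂ 𝔥

variable {H 𝔥 Hp : Type*}
  [NormedAddCommGroup H] [InnerProductSpace ℂ H]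
  [NormedAddCommGroup 𝔥] [InnerProductSpace ℂ 𝔥]
  [NormedAddCommGroup Hp] [InnerProductSpace ℂ Hp]

/-- The embedding `H₊² → H²`. -/
def Core.emb2 (C : Core H 𝔥 Hp) : Sq Hp →L[ℂ] Sq H := pm C.e C.e

/-- The action `(u₁,u₂) ↦ (-A* u₂, A* u₁)` (the common formula for `N` and its
extensions `𝒩`). -/
def Core.Nmax (C : Core H 𝔥 Hp) : Sq Hp →L[ℂ] Sq H :=
  mk2L ((-C.As).comp c2L) (C.As.comp c1L)

/-- The action of `N* : (u₁,u₂) ↦ (A* u₂, -A* u₁)`. -/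
def Core.NstarOp (C : Core H 𝔥 Hp) : Sq Hp →L[ℂ] Sq H := -C.Nmax

/-- The action of `(τN)* : (u₁,u₂) ↦ (A* u₁, -A* u₂)`. -/
def Core.tauNstarOp (C : Core H 𝔥 Hp) : Sq Hp →L[ℂ] Sq H :=
  mk2L (C.As.comp c1L) ((-C.As).comp c2L)

/-- Trace operator (boundary triplet map) for `A*`: bounded, surjective, and
satisfying the abstract Green identity. -/
structure IsTrace (C : Core H 𝔥 Hp) (tr : Hp →L[ℂ] Sq 𝔥) : Prop where
  surj : Function.Surjective tr
  green : ∀ u v : Hp, ⟪C.As u, C.e v⟫ - ⟪C.e u, C.As v⟫ = om (tr u) (tr v)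

/-- The doubled trace operator `T = tr ⊕ tr : H₊² → 𝔥⁴`. -/
def Top (tr : Hp →L[ℂ] Sq 𝔥) : Sq Hp →L[ℂ] Sq (Sq 𝔥) := pm tr tr

/-- `dom ⊆ H₊` is the domain of a self-adjoint extension of `A` (the extension being
the restriction of `A*` to `dom`). -/
structure IsSAExt (C : Core H 𝔥 Hp) (dom : Submodule ℂ Hp) : Prop where
  le : C.domA ≤ dom
  sa : ∀ v w : H,
      (∃ p ∈ dom, C.e p = v ∧ C.As p = w) ↔ ∀ u ∈ dom, ⟪C.As u, v⟫ = ⟪C.e u, w⟫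

/-- The bounded potential `V(u,v) = (-G v, F u)` on `H²`. -/
def Vop [CompleteSpace H] (F G : H →L[ℂ] H) : Sq H →L[ℂ] Sq H :=
  mk2L ((-G).comp c2L) (F.comp c1L)

/-- The adjoint potential `V*(u,v) = (F v, -G u)` on `H²`. -/
def VopStar [CompleteSpace H] (F G : H →L[ℂ] H) : Sq H →L[ℂ] Sq H :=
  mk2L (F.comp c2L) ((-G).comp c1L)

/-- `p ∈ dom(𝒜) × dom(ℬ)` and `(𝒩 + V - ζ) p = x`. -/
def ResSol (C : Core H 𝔥 Hp) [CompleteSpace H] (dU dV : Submodule ℂ Hp)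
    (V : Sq H →L[ℂ] Sq H) (ζ : ℂ) (p : Sq Hp) (x : Sq H) : Prop :=
  c1 p ∈ dU ∧ c2 p ∈ dV ∧ C.Nmax p + V (C.emb2 p) - ζ • C.emb2 p = x

/-- `R = (𝒩 + V - ζ)⁻¹`, viewed as a bounded operator from `H²` to `H₊²`. -/
def IsResS (C : Core H 𝔥 Hp) [CompleteSpace H] (dU dV : Submodule ℂ Hp)
    (V : Sq H →L[ℂ] Sq H) (ζ : ℂ) (R : Sq H →L[ℂ] Sq Hp) : Prop :=
  (∀ x, ResSol C dU dV V ζ (R x) x) ∧ ∀ p x, ResSol C dU dV V ζ p x → R x = p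

/-- `R = (𝒩 + V - ζ)⁻¹ ∈ B(H²)`. -/
def IsResW (C : Core H 𝔥 Hp) [CompleteSpace H] (dU dV : Submodule ℂ Hp)
    (V : Sq H →L[ℂ] Sq H) (ζ : ℂ) (R : Sq H →L[ℂ] Sq H) : Prop :=
  (∀ x, ∃ p, ResSol C dU dV V ζ p x ∧ C.emb2 p = R x) ∧
    ∀ p x, ResSol C dU dV V ζ p x → R x = C.emb2 p

/-- The spectrum of `𝒩 + V` (complement of the resolvent set). -/
def specSet (C : Core H 𝔥 Hp) [CompleteSpace H] (dU dV : Submodule ℂ Hp)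
    (V : Sq H →L[ℂ] Sq H) : Set ℂ :=
  {ζ | ¬ ∃ R : Sq H →L[ℂ] Sq Hp, IsResS C dU dV V ζ R}

/-- The resolvent `(𝒩 + V - ζ)⁻¹ : H² → H₊²` (defined by choice; `0` off the
resolvent set). -/
def resolventS (C : Core H 𝔥 Hp) [CompleteSpace H] (dU dV : Submodule ℂ Hp)
    (V : Sq H →L[ℂ] Sq H) (ζ : ℂ) : Sq H →L[ℂ] Sq Hp :=
  open Classical in
  if h : ∃ R, IsResS C dU dV V ζ R then h.choose else 0

/-- The resolvent `(𝒩 + V - ζ)⁻¹ ∈ B(H²)`. -/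
def resolventW (C : Core H 𝔥 Hp) [CompleteSpace H] (dU dV : Submodule ℂ Hp)
    (V : Sq H →L[ℂ] Sq H) (ζ : ℂ) : Sq H →L[ℂ] Sq H :=
  C.emb2.comp (resolventS C dU dV V ζ)

/-- `ζ` is an eigenvalue of `𝒩 + V`. -/
def IsEig (C : Core H 𝔥 Hp) [CompleteSpace H] (dU dV : Submodule ℂ Hp)
    (V : Sq H →L[ℂ] Sq H) (ζ : ℂ) : Prop :=
  ∃ p : Sq Hp, p ≠ 0 ∧ c1 p ∈ dU ∧ c2 p ∈ dV ∧
    C.Nmax p + V (C.emb2 p) = ζ • C.emb2 p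

/-- The one-parameter families of Hypothesis 3.1: trace operators, orthogonal
projections with Lagrangian ranges, self-adjoint extensions compatible with the
projections, and bounded self-adjoint perturbations. -/
structure IsFamily [CompleteSpace H] [CompleteSpace Hp] [FiniteDimensional ℂ 𝔥]
    (C : Core H 𝔥 Hp)
    (tr : ℝ → Hp →L[ℂ] Sq 𝔥) (P Q : ℝ → Sq 𝔥 →L[ℂ] Sq 𝔥)
    (dU dV : ℝ → Submodule ℂ Hp) (F G : ℝ → H →L[ℂ] H) : Prop where
  htr : ∀ t ∈ Icc (0:ℝ) 1, IsTrace C (tr t)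
  hP : ∀ t ∈ Icc (0:ℝ) 1, IsOrthProj (P t) ∧ IsLagrangianRange (P t)
  hQ : ∀ t ∈ Icc (0:ℝ) 1, IsOrthProj (Q t) ∧ IsLagrangianRange (Q t)
  hU : ∀ t ∈ Icc (0:ℝ) 1, IsSAExt C (dU t)
  hV : ∀ t ∈ Icc (0:ℝ) 1, IsSAExt C (dV t)
  htrU : ∀ t ∈ Icc (0:ℝ) 1, tr t '' ((dU t : Set Hp)) = Set.range (P t)
  htrV : ∀ t ∈ Icc (0:ℝ) 1, tr t '' ((dV t : Set Hp)) = Set.range (Q t)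
  hF : ∀ t ∈ Icc (0:ℝ) 1, IsSelfAdjoint (F t)
  hG : ∀ t ∈ Icc (0:ℝ) 1, IsSelfAdjoint (G t)

/-- Hypothesis 3.3: there is a point `z` in the resolvent set of `𝒩_t + V_t`
for all `t` near `t₀`. -/
def HypZ [CompleteSpace H] (C : Core H 𝔥 Hp) (dU dV : ℝ → Submodule ℂ Hp)
    (F G : ℝ → H →L[ℂ] H) (t₀ : ℝ) (z : ℂ) : Prop :=
  ∃ δ > 0, ∀ t : ℝ, |t - t₀| < δ →
    ∃ R, IsResS C (dU t) (dV t) (Vop (F t) (G t)) z R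

end CSO

namespace CSO

/-- the `λ`-crossing form computation in Lemma 4.10: for a
differentiable family `λ ↦ w_λ ∈ ker((N* + V* - λ)τ)`, one has
`Ω(T w_{λ₀}, T ẇ_{λ₀}) = -⟨τ w_{λ₀}, w_{λ₀}⟩`. -/
theorem statement12
    {H 𝔥 Hp : Type*}
    [NormedAddCommGroup H] [InnerProductSpace ℂ H] [CompleteSpace H]
    [NormedAddCommGroup 𝔥] [InnerProductSpace ℂ 𝔥] [FiniteDimensional ℂ 𝔥]
    [NormedAddCommGroup Hp] [InnerProductSpace ℂ Hp] [CompleteSpace Hp]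
    (C : Core H 𝔥 Hp) (tr : Hp →L[ℂ] Sq 𝔥) (htr : IsTrace C tr)
    (F G : H →L[ℂ] H) (hF : IsSelfAdjoint F) (hG : IsSelfAdjoint G)
    (lam₀ : ℝ) (w : ℝ → Sq Hp) (wd : Sq Hp)
    (hderiv : HasDerivAt w wd lam₀)
    (heq : ∃ δ > 0, ∀ lam : ℝ, |lam - lam₀| < δ →
      C.NstarOp (swapL Hp (w lam)) + VopStar F G (C.emb2 (swapL Hp (w lam)))
        - (lam : ℂ) • C.emb2 (swapL Hp (w lam)) = 0) :
    Om (Top tr (w lam₀)) (Top tr wd) =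
      -(inner ℂ (swapL H (C.emb2 (w lam₀))) (C.emb2 (w lam₀)) : ℂ) := by
  obtain ⟨δ, hδ, hker⟩ := heq
  set E2 : Sq Hp →L[ℂ] Sq H := C.emb2.comp (swapL Hp) with hE2
  set M : Sq Hp →L[ℂ] Sq H := C.NstarOp.comp (swapL Hp) + (VopStar F G).comp E2 with hMdef
  have hMw : ∀ lam : ℝ, |lam - lam₀| < δ → M (w lam) = (lam : ℂ) • E2 (w lam) := by
    intro lam h
    have h0 := hker lam h
    have : C.NstarOp (swapL Hp (w lam)) + VopStar F G (C.emb2 (swapL Hp (w lam)))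
        = (lam : ℂ) • C.emb2 (swapL Hp (w lam)) := by
      have := sub_eq_zero.mp (by simpa [sub_eq_zero] using h0)
      simpa using this
    simpa [hMdef, hE2] using this
  have hev : (fun lam => M (w lam)) =ᶠ[nhds lam₀] fun lam => (lam : ℂ) • E2 (w lam) := by
    filter_upwards [Metric.ball_mem_nhds lam₀ hδ] with lam h
    exact hMw lam (by simpa [Real.dist_eq] using h)
  have h1 : HasDerivAt (fun lam => M (w lam)) (M wd) lam₀ :=
    (M.restrictScalars ℝ).hasFDerivAt.comp_hasDerivAt lam₀ hderiv
  have h2 : HasDerivAt (fun lam : ℝ => (lam : ℂ) • E2 (w lam))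
      ((lam₀ : ℂ) • E2 wd + E2 (w lam₀)) lam₀ := by
    have hc : HasDerivAt (fun lam : ℝ => (lam : ℂ)) (1 : ℂ) lam₀ := by
      simpa using (hasDerivAt_id lam₀).ofReal_comp
    have hf : HasDerivAt (fun lam => E2 (w lam)) (E2 wd) lam₀ :=
      (E2.restrictScalars ℝ).hasFDerivAt.comp_hasDerivAt lam₀ hderiv
    exact (hc.smul hf).congr_deriv (by simp)
  have key : M wd = (lam₀ : ℂ) • E2 wd + E2 (w lam₀) :=
    (h1.congr_of_eventuallyEq hev.symm).unique h2
  set w₀ := w lam₀ with hw₀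
  -- component form of the maps
  have hMc : ∀ u : Sq Hp, M u =
      (WithLp.toLp 2 (C.As u.ofLp.1 + F (C.e u.ofLp.1), -(C.As u.ofLp.2) - G (C.e u.ofLp.2)) : Sq H) := by
    intro u
    simp only [hMdef, hE2, ContinuousLinearMap.add_apply, ContinuousLinearMap.comp_apply]
    apply WithLp.ofLp_injective 2; apply Prod.ext <;>
      simp [Core.NstarOp, Core.Nmax, Core.emb2, VopStar, swapL, pm, mk2L, c1L, c2L,
        ContinuousLinearMap.prod_apply, sub_eq_add_neg]
  have hE2c : ∀ u : Sq Hp, E2 u = (WithLp.toLp 2 (C.e u.ofLp.2, C.e u.ofLp.1) : Sq H) := by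
    intro u
    apply WithLp.ofLp_injective 2; apply Prod.ext <;> simp [hE2, Core.emb2, swapL, pm, mk2L, c1L, c2L]
  -- equations at lam₀
  have heq0 := hMw lam₀ (by simpa using hδ)
  rw [hMc, hE2c] at heq0
  have e1 : C.As w₀.ofLp.1 + F (C.e w₀.ofLp.1) = (lam₀ : ℂ) • C.e w₀.ofLp.2 := congrArg (fun x => x.ofLp.1) heq0
  have e2 : -(C.As w₀.ofLp.2) - G (C.e w₀.ofLp.2) = (lam₀ : ℂ) • C.e w₀.ofLp.1 := congrArg (fun x => x.ofLp.2) heq0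
  rw [hMc, hE2c, hE2c] at key
  have e3 : C.As wd.ofLp.1 + F (C.e wd.ofLp.1) = (lam₀ : ℂ) • C.e wd.ofLp.2 + C.e w₀.ofLp.2 :=
    congrArg (fun x => x.ofLp.1) key
  have e4 : -(C.As wd.ofLp.2) - G (C.e wd.ofLp.2) = (lam₀ : ℂ) • C.e wd.ofLp.1 + C.e w₀.ofLp.1 :=
    congrArg (fun x => x.ofLp.2) key
  have hA1 : C.As w₀.ofLp.1 = (lam₀ : ℂ) • C.e w₀.ofLp.2 - F (C.e w₀.ofLp.1) := by
    rw [← e1]; abel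
  have hA2 : C.As w₀.ofLp.2 = -((lam₀ : ℂ) • C.e w₀.ofLp.1) - G (C.e w₀.ofLp.2) := by
    rw [← e2]; abel
  have hA3 : C.As wd.ofLp.1 = (lam₀ : ℂ) • C.e wd.ofLp.2 + C.e w₀.ofLp.2 - F (C.e wd.ofLp.1) := by
    rw [← e3]; abel
  have hA4 : C.As wd.ofLp.2 = -((lam₀ : ℂ) • C.e wd.ofLp.1 + C.e w₀.ofLp.1) - G (C.e wd.ofLp.2) := by
    rw [← e4]; abel
  -- self-adjointness
  have hFs : ∀ x y : H, (inner ℂ (F x) y : ℂ) = inner ℂ x (F y) := by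
    intro x y
    have h := ContinuousLinearMap.adjoint_inner_left F y x
    rw [ContinuousLinearMap.isSelfAdjoint_iff'.mp hF] at h
    exact h
  have hGs : ∀ x y : H, (inner ℂ (G x) y : ℂ) = inner ℂ x (G y) := by
    intro x y
    have h := ContinuousLinearMap.adjoint_inner_left G y x
    rw [ContinuousLinearMap.isSelfAdjoint_iff'.mp hG] at h
    exact h
  -- unfold the goal
  have hOm : Om (Top tr w₀) (Top tr wd)
      = om (tr w₀.ofLp.1) (tr wd.ofLp.1) - om (tr w₀.ofLp.2) (tr wd.ofLp.2) := by
    simp [Om, Top, pm, c1, c2]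
  have hRHS : (inner ℂ (swapL H (C.emb2 w₀)) (C.emb2 w₀) : ℂ)
      = (inner ℂ (C.e w₀.ofLp.2) (C.e w₀.ofLp.1) : ℂ) + inner ℂ (C.e w₀.ofLp.1) (C.e w₀.ofLp.2) := by
    have h1' : swapL H (C.emb2 w₀) = (WithLp.toLp 2 (C.e w₀.ofLp.2, C.e w₀.ofLp.1) : Sq H) := by
      apply WithLp.ofLp_injective 2; apply Prod.ext <;> simp [Core.emb2, swapL, pm, mk2L, c1L, c2L]
    have h2' : C.emb2 w₀ = (WithLp.toLp 2 (C.e w₀.ofLp.1, C.e w₀.ofLp.2) : Sq H) := by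
      apply WithLp.ofLp_injective 2; apply Prod.ext <;> simp [Core.emb2, pm]
    rw [h1', h2', WithLp.prod_inner_apply]
  rw [hOm, hRHS, ← htr.green w₀.ofLp.1 wd.ofLp.1, ← htr.green w₀.ofLp.2 wd.ofLp.2,
    hA1, hA2, hA3, hA4]
  simp only [inner_sub_left, inner_sub_right, inner_add_left, inner_add_right,
    inner_neg_left, inner_neg_right, inner_smul_left, inner_smul_right,
    Complex.conj_ofReal, hFs, hGs]
  ring

end CSO
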